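/- For every positive integer i, the polynomial D_i := ∏_{j=0}^{i-1} (θ^{q^i} − θ^{q^j}) in 𝔽_q[θ] equals the product of all monic polynomials of degree i in 𝔽_q[θ]. -/

import Mathlib

open Polynomial Finset

namespace CarlitzAux

/-- Numeric lemma: if `q^d - 1 ∣ q^k - 1` with `q ≥ 2`, `d > 0`, then `d ∣ k`. -/
lemma dvd_of_pow_sub_one_dvd {q d k : ℕ} (hq : 2 ≤ q) (hd : 0 < d)
    (h : q ^ d - 1 ∣ q ^ k - 1) : d ∣ k := by
  have hr : k % d < d := Nat.mod_lt _ hd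
  have hdvd1 : q ^ d - 1 ∣ q ^ k - q ^ (k % d) := by
    have h2 : q ^ k - q ^ (k % d) = q ^ (k % d) * ((q ^ d) ^ (k / d) - 1) := by
      rw [Nat.mul_sub, mul_one, ← pow_mul, ← pow_add]
      congr 2
      have := Nat.div_add_mod k d
      omega
    rw [h2]
    exact Dvd.dvd.mul_left (by simpa using Nat.sub_dvd_pow_sub_pow (q ^ d) 1 (k / d)) _
  have hle1 : q ^ (k % d) ≤ q ^ k := Nat.pow_le_pow_right (by omega) (Nat.mod_le _ _)
  have h1q : 1 ≤ q ^ (k % d) := Nat.one_le_pow _ _ (by omega)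
  have hdvd2 : q ^ d - 1 ∣ q ^ (k % d) - 1 := by
    have h3 := Nat.dvd_sub h hdvd1
    have heq : q ^ k - 1 - (q ^ k - q ^ (k % d)) = q ^ (k % d) - 1 := by omega
    rwa [heq] at h3
  have hlt : q ^ (k % d) < q ^ d := Nat.pow_lt_pow_right (by omega) hr
  have hz : q ^ (k % d) - 1 = 0 := by
    by_contra hne
    have := Nat.le_of_dvd (Nat.pos_of_ne_zero hne) hdvd2
    omega
  have h1 : q ^ (k % d) = 1 := by omega
  have h0 : k % d = 0 := by
    by_contra hne
    have : q ^ 1 ≤ q ^ (k % d) := Nat.pow_le_pow_right (by omega) (by omega)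
    simp at this; omega
  exact Nat.dvd_of_mod_eq_zero h0

variable {F : Type*} [Field F] [Fintype F]

/-- An irreducible `p` divides `X^{q^k} - X` iff `deg p ∣ k`. -/
lemma dvd_X_pow_card_pow_sub_X_iff {p : F[X]} (hp : Irreducible p) (k : ℕ) :
    p ∣ X ^ Fintype.card F ^ k - X ↔ p.natDegree ∣ k := by
  classical
  haveI : Fact (Irreducible p) := ⟨hp⟩
  have hp0 : p ≠ 0 := hp.ne_zero
  set q := Fintype.card F with hq
  set K := AdjoinRoot p with hK
  letI : Fintype K := Module.fintypeOfFintype (AdjoinRoot.powerBasis hp0).basis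
  have hcard : Fintype.card K = q ^ p.natDegree := by
    rw [Module.card_eq_pow_finrank (K := F) (V := K), (AdjoinRoot.powerBasis hp0).finrank,
      AdjoinRoot.powerBasis_dim]
  have hkey : p ∣ X ^ q ^ k - X ↔ (AdjoinRoot.root p) ^ q ^ k = AdjoinRoot.root p := by
    rw [← AdjoinRoot.mk_eq_zero, map_sub, map_pow, AdjoinRoot.mk_X, sub_eq_zero]
  rw [hkey]
  constructor
  · intro hroot
    -- every element of K is fixed by the q^k power map
    have hall : ∀ z : K, z ^ q ^ k = z := by
      set r := ringChar F with hr
      obtain ⟨e, hrp, hqe⟩ := FiniteField.card F r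
      rw [← hq] at hqe
      haveI : Fact r.Prime := ⟨hrp⟩
      haveI : CharP K r := charP_of_injective_algebraMap (algebraMap F K).injective r
      intro z
      have hz : z ∈ Algebra.adjoin F ({AdjoinRoot.root p} : Set K) := by
        rw [AdjoinRoot.adjoinRoot_eq_top]; trivial
      induction hz using Algebra.adjoin_induction with
      | mem x hx =>
        rw [Set.mem_singleton_iff] at hx
        rw [hx]; exact hroot
      | algebraMap a =>
        rw [← map_pow]
        congr 1
        exact FiniteField.pow_card_pow k a
      | add x y _ _ hx hy =>
        have : q ^ k = r ^ (e * k) := by rw [hqe, ← pow_mul]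
        rw [this] at hx hy ⊢
        rw [add_pow_char_pow, hx, hy]
      | mul x y _ _ hx hy =>
        rw [mul_pow, hx, hy]
    obtain ⟨g, hg⟩ := IsCyclic.exists_generator (α := Kˣ)
    have horder : orderOf g = q ^ p.natDegree - 1 := by
      rw [orderOf_eq_card_of_forall_mem_zpowers hg, Nat.card_eq_fintype_card,
        Fintype.card_units, hcard]
    have hg1 : g ^ (q ^ k - 1) = 1 := by
      have h1 : g ^ q ^ k = g := by
        ext
        rw [Units.val_pow_eq_pow_val]
        exact hall g
      have h2 : g ^ (q ^ k - 1) * g = g := by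
        rw [← pow_succ]
        have : q ^ k - 1 + 1 = q ^ k := by
          have := Nat.one_le_pow k q Fintype.card_pos
          omega
        rw [this, h1]
      calc g ^ (q ^ k - 1) = g ^ (q ^ k - 1) * g * g⁻¹ := by group
        _ = g * g⁻¹ := by rw [h2]
        _ = 1 := mul_inv_cancel g
    have hdvd := orderOf_dvd_of_pow_eq_one hg1
    rw [horder] at hdvd
    exact dvd_of_pow_sub_one_dvd Fintype.one_lt_card hp.natDegree_pos hdvd
  · rintro ⟨m, rfl⟩
    have : q ^ (p.natDegree * m) = Fintype.card K ^ m := by rw [hcard, ← pow_mul]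
    rw [this]
    exact FiniteField.pow_card_pow m _

lemma squarefree_X_pow_card_pow_sub_X {k : ℕ} (hk : 0 < k) :
    Squarefree (X ^ Fintype.card F ^ k - X : F[X]) := by
  apply Separable.squarefree
  have hder : derivative (X ^ Fintype.card F ^ k - X : F[X]) = -1 := by
    rw [derivative_sub, derivative_X_pow, derivative_X]
    have h0 : ((Fintype.card F ^ k : ℕ) : F) = 0 := by
      rw [Nat.cast_pow, FiniteField.cast_card_eq_zero, zero_pow hk.ne']
    rw [h0, map_zero, zero_mul, zero_sub]
  rw [Polynomial.Separable, hder]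
  exact ⟨0, -1, by ring⟩

lemma emultiplicity_X_pow_card_pow_sub_X {p : F[X]} (hp : Irreducible p) {k : ℕ} (hk : 0 < k) :
    emultiplicity p (X ^ Fintype.card F ^ k - X : F[X])
      = if p.natDegree ∣ k then 1 else 0 := by
  split_ifs with h
  · refine le_antisymm ?_ ?_
    · rcases (squarefree_iff_emultiplicity_le_one _).1
        (squarefree_X_pow_card_pow_sub_X hk) p with h1 | h1
      · exact h1
      · exact absurd h1 hp.not_isUnit
    · have := (dvd_X_pow_card_pow_sub_X_iff hp k).mpr h
      have h2 := pow_dvd_iff_le_emultiplicity.mp (show p ^ 1 ∣ _ by simpa using this)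
      exact_mod_cast h2
  · exact emultiplicity_eq_zero.2 fun hd => h ((dvd_X_pow_card_pow_sub_X_iff hp k).mp hd)

end CarlitzAux

namespace CarlitzAux

variable {F : Type*} [Field F] [Fintype F]

open scoped Classical

variable (F) in
/-- The monic polynomial with lower coefficients given by `c`. -/
noncomputable def polyOf (n : ℕ) (c : Fin n → F) : F[X] :=
  X ^ n + ∑ j : Fin n, C (c j) * X ^ (j : ℕ)

lemma degree_sum_lt (n : ℕ) (c : Fin n → F) :
    degree (∑ j : Fin n, C (c j) * X ^ (j : ℕ)) < (n : WithBot ℕ) := by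
  refine lt_of_le_of_lt (degree_sum_le _ _) ?_
  rw [Finset.sup_lt_iff (by exact_mod_cast WithBot.bot_lt_coe n)]
  intro j _
  exact lt_of_le_of_lt (degree_C_mul_X_pow_le _ _) (by exact_mod_cast j.2)

lemma polyOf_monic (n : ℕ) (c : Fin n → F) : (polyOf F n c).Monic :=
  monic_X_pow_add (degree_sum_lt n c)

lemma polyOf_degree (n : ℕ) (c : Fin n → F) : (polyOf F n c).degree = n := by
  rw [polyOf, degree_add_eq_left_of_degree_lt, degree_X_pow]
  rw [degree_X_pow]
  exact degree_sum_lt n c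

lemma polyOf_natDegree (n : ℕ) (c : Fin n → F) : (polyOf F n c).natDegree = n :=
  natDegree_eq_of_degree_eq_some (polyOf_degree n c)

lemma polyOf_coeff (n : ℕ) (c : Fin n → F) (m : Fin n) : (polyOf F n c).coeff m = c m := by
  classical
  rw [polyOf, coeff_add, coeff_X_pow, if_neg (by omega), finset_sum_coeff, zero_add]
  rw [Finset.sum_eq_single m]
  · simp [coeff_C_mul, coeff_X_pow]
  · intro j _ hne
    have : ¬((m : ℕ) = (j : ℕ)) := fun h => hne (Fin.ext h.symm)
    simp [coeff_C_mul, coeff_X_pow, this]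
  · simp

lemma polyOf_injective (n : ℕ) : Function.Injective (polyOf F n) := by
  intro c c' h
  funext m
  rw [← polyOf_coeff n c m, h, polyOf_coeff]

variable (F) in
open Classical in
/-- The finset of monic polynomials of degree `n`. -/
noncomputable def M (n : ℕ) : Finset F[X] := Finset.image (polyOf F n) Finset.univ

lemma mem_M_iff {n : ℕ} {f : F[X]} : f ∈ M F n ↔ f.Monic ∧ f.natDegree = n := by
  classical
  constructor
  · intro hf
    rw [M, Finset.mem_image] at hf
    obtain ⟨c, -, rfl⟩ := hf
    exact ⟨polyOf_monic n c, polyOf_natDegree n c⟩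
  · rintro ⟨hm, rfl⟩
    rw [M, Finset.mem_image]
    refine ⟨fun j => f.coeff j, Finset.mem_univ _, ?_⟩
    rw [polyOf]
    conv_rhs => rw [hm.as_sum]
    congr 1
    exact Fin.sum_univ_eq_sum_range (fun j => C (f.coeff j) * X ^ j) _

lemma card_M (n : ℕ) : (M F n).card = Fintype.card F ^ n := by
  classical
  rw [M, Finset.card_image_of_injective _ (polyOf_injective n), Finset.card_univ]
  simp

lemma card_filter_dvd {p : F[X]} (hp : Irreducible p) (hm : p.Monic) (i k : ℕ) :
    ((M F i).filter (fun f => p ^ k ∣ f)).card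
      = if k * p.natDegree ≤ i then Fintype.card F ^ (i - k * p.natDegree) else 0 := by
  classical
  have hp0 : p ≠ 0 := hp.ne_zero
  split_ifs with hle
  · rw [← card_M (F := F) (i - k * p.natDegree)]
    symm
    apply Finset.card_bij (fun g _ => p ^ k * g)
    · intro g hg
      obtain ⟨hgm, hgd⟩ := mem_M_iff.mp hg
      rw [Finset.mem_filter]
      refine ⟨mem_M_iff.mpr ⟨(hm.pow k).mul hgm, ?_⟩, Dvd.intro _ rfl⟩
      rw [natDegree_mul (pow_ne_zero _ hp0) hgm.ne_zero, natDegree_pow, hgd]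
      omega
    · intro g hg g' hg' h
      exact mul_left_cancel₀ (pow_ne_zero _ hp0) h
    · intro f hf
      rw [Finset.mem_filter] at hf
      obtain ⟨hfM, g, rfl⟩ := hf
      obtain ⟨hfm, hfd⟩ := mem_M_iff.mp hfM
      have hg0 : g ≠ 0 := by
        rintro rfl
        rw [mul_zero] at hfm
        exact hfm.ne_zero rfl
      refine ⟨g, mem_M_iff.mpr ⟨(hm.pow k).of_mul_monic_left hfm, ?_⟩, rfl⟩
      rw [natDegree_mul (pow_ne_zero _ hp0) hg0, natDegree_pow] at hfd
      omega
  · rw [Finset.card_eq_zero, Finset.filter_eq_empty_iff]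
    intro f hf hdvd
    obtain ⟨hfm, hfd⟩ := mem_M_iff.mp hf
    have := Polynomial.natDegree_le_of_dvd hdvd hfm.ne_zero
    rw [natDegree_pow, hfd] at this
    omega

lemma emult_mem_M {p : F[X]} (hp : Prime p) (hd : 0 < p.natDegree) {i : ℕ} {f : F[X]}
    (hf : f ∈ M F i) :
    emultiplicity p f = (((Finset.Icc 1 i).filter (fun k => p ^ k ∣ f)).card : ℕ∞) := by
  classical
  obtain ⟨hmon, hdeg⟩ := mem_M_iff.mp hf
  have hfin : FiniteMultiplicity p f := FiniteMultiplicity.of_prime_left hp hmon.ne_zero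
  set m := multiplicity p f with hm
  have hdvd : ∀ k : ℕ, p ^ k ∣ f ↔ k ≤ m := fun k => hfin.pow_dvd_iff_le_multiplicity
  have hmi : m ≤ i := by
    have h1 := (hdvd m).mpr le_rfl
    have hnd := Polynomial.natDegree_le_of_dvd h1 hmon.ne_zero
    rw [natDegree_pow, hdeg] at hnd
    calc m ≤ m * p.natDegree := Nat.le_mul_of_pos_right m hd
      _ ≤ i := hnd
  have hset : (Finset.Icc 1 i).filter (fun k => p ^ k ∣ f) = Finset.Icc 1 m := by
    ext k
    simp only [Finset.mem_filter, Finset.mem_Icc, hdvd k]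
    omega
  rw [hset, Nat.card_Icc]
  rw [hfin.emultiplicity_eq_multiplicity]
  norm_num
  exact hm.symm

end CarlitzAux

namespace CarlitzAux

variable {F : Type*} [Field F] [Fintype F]

lemma sum_reindex (q d i : ℕ) (hd : 0 < d) :
    (∑ j ∈ Finset.range i, if d ∣ i - j then q ^ j else 0)
      = ∑ k ∈ Finset.Icc 1 i, if k * d ≤ i then q ^ (i - k * d) else 0 := by
  classical
  rw [← Finset.sum_filter, ← Finset.sum_filter]
  refine Finset.sum_nbij' (fun j => (i - j) / d) (fun k => i - k * d) ?_ ?_ ?_ ?_ ?_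
  · intro j hj
    simp only [Finset.mem_filter, Finset.mem_range] at hj
    obtain ⟨hji, hdvd⟩ := hj
    have hmul : (i - j) / d * d = i - j := Nat.div_mul_cancel hdvd
    simp only [Finset.mem_filter, Finset.mem_Icc]
    refine ⟨⟨(Nat.one_le_div_iff hd).mpr (Nat.le_of_dvd (by omega) hdvd),
      le_trans (Nat.div_le_self _ _) (by omega)⟩, by omega⟩
  · intro k hk
    simp only [Finset.mem_filter, Finset.mem_Icc] at hk
    obtain ⟨⟨hk1, hki⟩, hkd⟩ := hk
    have h1 : 1 ≤ k * d := Nat.mul_pos hk1 hd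
    simp only [Finset.mem_filter, Finset.mem_range]
    refine ⟨by omega, ?_⟩
    have h2 : i - (i - k * d) = k * d := by omega
    rw [h2]
    exact dvd_mul_left d k
  · intro j hj
    simp only [Finset.mem_filter, Finset.mem_range] at hj
    obtain ⟨hji, hdvd⟩ := hj
    have hmul : (i - j) / d * d = i - j := Nat.div_mul_cancel hdvd
    show i - (i - j) / d * d = j
    omega
  · intro k hk
    simp only [Finset.mem_filter, Finset.mem_Icc] at hk
    obtain ⟨⟨hk1, hki⟩, hkd⟩ := hk
    have h2 : i - (i - k * d) = k * d := by omega
    show (i - (i - k * d)) / d = k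
    rw [h2, Nat.mul_div_cancel _ hd]
  · intro j hj
    simp only [Finset.mem_filter, Finset.mem_range] at hj
    obtain ⟨hji, hdvd⟩ := hj
    have hmul : (i - j) / d * d = i - j := Nat.div_mul_cancel hdvd
    show q ^ j = q ^ (i - (i - j) / d * d)
    rw [hmul]
    congr 1
    omega

lemma emult_main {p : F[X]} (hp : Irreducible p) (hm : p.Monic) (i : ℕ) :
    emultiplicity p
        (∏ j ∈ Finset.range i, ((X : F[X]) ^ Fintype.card F ^ i - X ^ Fintype.card F ^ j))
      = emultiplicity p (∏ f ∈ M F i, f) := by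
  classical
  have hprime : Prime p := UniqueFactorizationMonoid.irreducible_iff_prime.mp hp
  set q := Fintype.card F with hq
  set d := p.natDegree with hd
  have hd0 : 0 < d := hp.natDegree_pos
  obtain ⟨e, hrp, hqe⟩ := FiniteField.card F (ringChar F)
  rw [← hq] at hqe
  haveI : Fact (ringChar F).Prime := ⟨hrp⟩
  have hfac : ∀ j ∈ Finset.range i, (X : F[X]) ^ q ^ i - X ^ q ^ j
      = ((X : F[X]) ^ q ^ (i - j) - X) ^ q ^ j := by
    intro j hj
    rw [Finset.mem_range] at hj
    have hqj : q ^ j = ringChar F ^ (e * j) := by rw [hqe, ← pow_mul]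
    rw [hqj, sub_pow_char_pow, ← hqj, ← pow_mul, ← pow_add, Nat.sub_add_cancel hj.le]
  calc emultiplicity p (∏ j ∈ Finset.range i, ((X : F[X]) ^ q ^ i - X ^ q ^ j))
      = ∑ j ∈ Finset.range i,
          emultiplicity p (((X : F[X]) ^ q ^ (i - j) - X) ^ q ^ j) := by
        rw [Finset.prod_congr rfl hfac, Finset.emultiplicity_prod hprime]
    _ = ∑ j ∈ Finset.range i, ((if d ∣ i - j then q ^ j else 0 : ℕ) : ℕ∞) := by
        refine Finset.sum_congr rfl fun j hj => ?_
        rw [Finset.mem_range] at hj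
        rw [emultiplicity_pow hprime,
          emultiplicity_X_pow_card_pow_sub_X hp (k := i - j) (by omega)]
        split_ifs with h <;> simp
    _ = ((∑ j ∈ Finset.range i, if d ∣ i - j then q ^ j else 0 : ℕ) : ℕ∞) := by
        rw [Nat.cast_sum]
    _ = ((∑ k ∈ Finset.Icc 1 i, if k * d ≤ i then q ^ (i - k * d) else 0 : ℕ) : ℕ∞) := by
        rw [sum_reindex q d i hd0]
    _ = ((∑ k ∈ Finset.Icc 1 i, ((M F i).filter (fun f => p ^ k ∣ f)).card : ℕ) : ℕ∞) := by
        congr 1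
        refine Finset.sum_congr rfl fun k hk => ?_
        rw [card_filter_dvd hp hm i k]
    _ = ((∑ f ∈ M F i, ((Finset.Icc 1 i).filter (fun k => p ^ k ∣ f)).card : ℕ) : ℕ∞) := by
        congr 1
        simp only [Finset.card_filter]
        rw [Finset.sum_comm]
    _ = ∑ f ∈ M F i, emultiplicity p f := by
        rw [Nat.cast_sum]
        refine Finset.sum_congr rfl fun f hf => ?_
        rw [emult_mem_M hprime hd0 hf]
    _ = emultiplicity p (∏ f ∈ M F i, f) := (Finset.emultiplicity_prod hprime _ _).symm

end CarlitzAux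

open CarlitzAux in
/-- For every positive integer `i`, the Carlitz quantity
`D_i = ∏_{j=0}^{i-1} (θ^{q^i} − θ^{q^j})` in `𝔽_q[θ]` equals the product of all monic
polynomials of degree `i` (parametrized by their lower-order coefficient vectors). -/
theorem carlitz_D_eq_prod_monic (F : Type*) [Field F] [Fintype F]
    (q : ℕ) (hq : q = Fintype.card F) (i : ℕ) (hi : 0 < i) :
    ∏ j ∈ Finset.range i, ((X : F[X]) ^ q ^ i - X ^ q ^ j) =
      ∏ c : Fin i → F, ((X : F[X]) ^ i + ∑ j : Fin i, C (c j) * X ^ (j : ℕ)) := by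
  classical
  subst hq
  have hRHS : (∏ c : Fin i → F, ((X : F[X]) ^ i + ∑ j : Fin i, C (c j) * X ^ (j : ℕ)))
      = ∏ f ∈ M F i, f := by
    rw [M, Finset.prod_image]
    · rfl
    · intro c _ c' _ h
      exact polyOf_injective i h
  rw [hRHS]
  set L := ∏ j ∈ Finset.range i, ((X : F[X]) ^ Fintype.card F ^ i - X ^ Fintype.card F ^ j)
    with hLdef
  set R := ∏ f ∈ M F i, f with hRdef
  have hL : L.Monic := by
    apply monic_prod_of_monic
    intro j hj
    rw [Finset.mem_range] at hj
    rw [sub_eq_add_neg]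
    apply monic_X_pow_add
    rw [degree_neg, degree_X_pow]
    exact_mod_cast Nat.pow_lt_pow_right Fintype.one_lt_card hj
  have hR : R.Monic := monic_prod_of_monic _ _ fun f hf => (mem_M_iff.mp hf).1
  apply Polynomial.eq_of_monic_of_associated hL hR
  rw [UniqueFactorizationMonoid.associated_iff_normalizedFactors_eq_normalizedFactors
    hL.ne_zero hR.ne_zero]
  rw [Multiset.ext]
  intro r
  by_cases hrmem : r ∈ UniqueFactorizationMonoid.normalizedFactors L ∨
      r ∈ UniqueFactorizationMonoid.normalizedFactors R
  · have hirr : Irreducible r := hrmem.elim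
      (fun h => UniqueFactorizationMonoid.irreducible_of_normalized_factor r h)
      (fun h => UniqueFactorizationMonoid.irreducible_of_normalized_factor r h)
    have hnorm : normalize r = r := hrmem.elim
      (fun h => UniqueFactorizationMonoid.normalize_normalized_factor r h)
      (fun h => UniqueFactorizationMonoid.normalize_normalized_factor r h)
    have hmon : r.Monic := by
      have := Polynomial.monic_normalize (p := r) hirr.ne_zero
      rwa [hnorm] at this
    have e1 := UniqueFactorizationMonoid.emultiplicity_eq_count_normalizedFactors hirr hL.ne_zero
    have e2 := UniqueFactorizationMonoid.emultiplicity_eq_count_normalizedFactors hirr hR.ne_zero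
    rw [hnorm] at e1 e2
    have hmain := emult_main hirr hmon i
    rw [hLdef] at e1
    rw [hRdef] at e2
    rw [e1, e2] at hmain
    exact_mod_cast hmain
  · push_neg at hrmem
    rw [Multiset.count_eq_zero_of_notMem hrmem.1, Multiset.count_eq_zero_of_notMem hrmem.2]
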